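/- For every 2-limited word u there exists a compact word w such that the identity u ≈ w is a consequence of {σμ, y x x t y ≈ x x y t y}^δ, where σμ is x t1 x y t2 y ≈ x t1 y x t2 y. -/

import Mathlib

/-- Words over a countably infinite alphabet of variables (identified with ℕ). -/
abbrev Wd := List ℕ

/-- Evaluation of a word in a monoid under an assignment of the variables. -/
def evalWord {M : Type*} [Monoid M] (φ : ℕ → M) (u : Wd) : M := (u.map φ).prod

/-- A monoid `M` satisfies the identity `e = (u, v)`. -/
def Sat (M : Type*) [Monoid M] (e : Wd × Wd) : Prop :=
  ∀ φ : ℕ → M, evalWord φ e.1 = evalWord φ e.2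

/-- The identity `e` is a consequence of the set of identities `Γ`:
every monoid satisfying all identities of `Γ` satisfies `e`. -/
def Consequence (Γ : Set (Wd × Wd)) (e : Wd × Wd) : Prop :=
  ∀ (M : Type) [Monoid M], (∀ f ∈ Γ, Sat M f) → Sat M e

/-- The content of a word: the set of variables occurring in it. -/
def conW (u : Wd) : Set ℕ := {x | x ∈ u}

/-- The set of linear (exactly once occurring) variables of a word. -/
def linW (u : Wd) : Set ℕ := {x | u.count x = 1}

/-- The set of non-linear (more than once occurring) variables of a word. -/
def nonW (u : Wd) : Set ℕ := {x | 2 ≤ u.count x}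

/-- `restrict u X` is the word obtained from `u` by deleting all occurrences of
all variables not in `X`. -/
noncomputable def restrict (u : Wd) (X : Set ℕ) : Wd :=
  u.filter (fun a => @decide (a ∈ X) (Classical.propDecidable _))

/-- The closure of a set of identities under deleting variables. -/
def delta (Γ : Set (Wd × Wd)) : Set (Wd × Wd) :=
  {e | ∃ f ∈ Γ, ∃ X : Set ℕ, e = (restrict f.1 X, restrict f.2 X)}

/-- A word is almost-linear if it has at most one non-linear variable. -/
def AlmostLinearW (u : Wd) : Prop := ∀ x y, 2 ≤ u.count x → 2 ≤ u.count y → x = y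

/-- An identity is almost-linear if both of its sides are almost-linear words. -/
def AlmostLinearId (e : Wd × Wd) : Prop := AlmostLinearW e.1 ∧ AlmostLinearW e.2

/-- An identity is regular if both sides have the same content. -/
def RegularId (e : Wd × Wd) : Prop := conW e.1 = conW e.2

/-- A word `u` is an isoterm for a monoid `M` if the only word `v` with
`M ⊨ u ≈ v` is `u` itself. -/
def Isoterm (M : Type*) [Monoid M] (u : Wd) : Prop := ∀ v : Wd, Sat M (u, v) → v = u

/-- An identity `u ≈ v` is block-balanced if `u(x, lin u) = v(x, lin u)`
for every variable `x`. -/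
def BlockBalanced (e : Wd × Wd) : Prop :=
  ∀ x : ℕ, restrict e.1 ({x} ∪ linW e.1) = restrict e.2 ({x} ∪ linW e.1)

/-- A monoid is finitely based: some finite set of its identities implies all of them. -/
def FinitelyBased (S : Type*) [Monoid S] : Prop :=
  ∃ Γ : Set (Wd × Wd), Γ.Finite ∧ (∀ e ∈ Γ, Sat S e) ∧
    ∀ e : Wd × Wd, Sat S e → Consequence Γ e

/-- Index of the first occurrence of a variable in a word. -/
def firstIdx (u : Wd) (x : ℕ) : ℕ := u.idxOf x

/-- Index of the last occurrence of a variable in a word. -/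
def lastIdx (u : Wd) (x : ℕ) : ℕ := u.length - 1 - u.reverse.idxOf x

/-- σ1 : x y t1 x t2 y ≈ y x t1 x t2 y, with x=0, y=1, t1=2, t2=3. -/
def sigma1 : Wd × Wd := ([0,1,2,0,3,1], [1,0,2,0,3,1])

/-- σμ : x t1 x y t2 y ≈ x t1 y x t2 y, with x=0, y=1, t1=2, t2=3. -/
def sigmaMu : Wd × Wd := ([0,2,0,1,3,1], [0,2,1,0,3,1])

/-- σ2 : x t1 y t2 x y ≈ x t1 y t2 y x, with x=0, y=1, t1=2, t2=3. -/
def sigma2 : Wd × Wd := ([0,2,1,3,0,1], [0,2,1,3,1,0])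

/-- A word is compact: for every non-linear variable `x`, if two occurrences of
`x` have no linear variable between them, then every letter between them is `x`. -/
def CompactW (u : Wd) : Prop :=
  ∀ x : ℕ, 2 ≤ u.count x →
    ∀ i j : ℕ, i < j → j < u.length → u.getD i 0 = x → u.getD j 0 = x →
      (∀ k, i < k → k < j → u.getD k 0 ∉ linW u) →
      ∀ k, i < k → k < j → u.getD k 0 = x

/- ===== part 1 ===== -/
lemma restrict_univ (u : Wd) : restrict u Set.univ = u := by
  unfold restrict
  rw [List.filter_eq_self]
  intro a _
  simp

def GammaB : Set (Wd × Wd) := delta {sigmaMu, ([1,0,0,2,1], [0,0,1,2,1])}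

def RelW (u v : Wd) : Prop := Consequence GammaB (u, v)

lemma rel_refl (u : Wd) : RelW u u := fun _ _ _ _ => rfl

lemma rel_trans {u v w : Wd} (h1 : RelW u v) (h2 : RelW v w) : RelW u w :=
  fun M _ hΓ φ => (h1 M hΓ φ).trans (h2 M hΓ φ)

lemma sat_sigmaMu {M : Type} [Monoid M] (hΓ : ∀ f ∈ GammaB, Sat M f) : Sat M sigmaMu := by
  apply hΓ
  exact ⟨sigmaMu, Or.inl rfl, Set.univ, by rw [restrict_univ, restrict_univ]⟩

lemma sat_B {M : Type} [Monoid M] (hΓ : ∀ f ∈ GammaB, Sat M f) :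
    Sat M (([1,0,0,2,1], [0,0,1,2,1]) : Wd × Wd) := by
  apply hΓ
  exact ⟨([1,0,0,2,1], [0,0,1,2,1]), Or.inr rfl, Set.univ, by rw [restrict_univ, restrict_univ]⟩

lemma sigma_swap {M : Type} [Monoid M] (hσ : Sat M sigmaMu) (a b s t z : M) :
    a * (s * (a * (b * (t * (b * z))))) = a * (s * (b * (a * (t * (b * z))))) := by
  have h := hσ (fun n => if n = 0 then a else if n = 1 then b else if n = 2 then s else t)
  simp only [sigmaMu, evalWord, List.map_cons, List.map_nil, List.prod_cons, List.prod_nil] at h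
  norm_num at h
  have h2 := congrArg (fun w => w * z) h
  simpa [mul_assoc] using h2

lemma b_swap {M : Type} [Monoid M] (hB : Sat M (([1,0,0,2,1], [0,0,1,2,1]) : Wd × Wd))
    (a b t z : M) :
    b * (a * (a * (t * (b * z)))) = a * (a * (b * (t * (b * z)))) := by
  have h := hB (fun n => if n = 0 then a else if n = 1 then b else t)
  simp only [evalWord, List.map_cons, List.map_nil, List.prod_cons, List.prod_nil] at h
  norm_num at h
  have h2 := congrArg (fun w => w * z) h
  simpa [mul_assoc] using h2

lemma rel_R1 (P1 P2 Q1 Q2 : Wd) (c o : ℕ) :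
    RelW (P1 ++ c :: P2 ++ o :: c :: Q1 ++ o :: Q2) (P1 ++ c :: P2 ++ c :: o :: Q1 ++ o :: Q2) := by
  intro M _ hΓ φ
  have hσ := sat_sigmaMu hΓ
  simp only [evalWord, List.map_append, List.map_cons, List.prod_append, List.prod_cons, mul_assoc]
  exact congrArg (fun w => (List.map φ P1).prod * w)
    (sigma_swap hσ (φ c) (φ o) (List.map φ P2).prod (List.map φ Q1).prod (List.map φ Q2).prod).symm

lemma rel_R2 (P Q1 Q2 : Wd) (c o : ℕ) :
    RelW (P ++ o :: c :: c :: Q1 ++ o :: Q2) (P ++ c :: c :: o :: Q1 ++ o :: Q2) := by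
  intro M _ hΓ φ
  have hB := sat_B hΓ
  simp only [evalWord, List.map_append, List.map_cons, List.prod_append, List.prod_cons, mul_assoc]
  exact congrArg (fun w => (List.map φ P).prod * w)
    (b_swap hB (φ c) (φ o) (List.map φ Q1).prod (List.map φ Q2).prod)

/- ===== part 2 : measure ===== -/
def gg (a : ℕ) : Wd → ℕ
  | [] => 0
  | b :: t => (b :: t).count a + gg a t

def meas : Wd → ℕ
  | [] => 0
  | a :: t => gg a t + meas t

def hh : Wd → Wd → ℕ
  | [], _ => 0
  | b :: s, t => gg b t + s.length * t.count b + hh s t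

def crossW : Wd → Wd → ℕ
  | [], _ => 0
  | b :: s, t => t.count b + crossW s t

def hg : Wd → Wd → ℕ
  | [], _ => 0
  | b :: s, t => gg b t + hg s t

def hw : Wd → Wd → ℕ
  | [], _ => 0
  | b :: s, t => s.length * t.count b + hw s t

lemma gg_append (a : ℕ) (s t : Wd) :
    gg a (s ++ t) = gg a s + gg a t + s.length * t.count a := by
  induction s with
  | nil => simp [gg]
  | cons b s ih =>
    rw [List.cons_append]
    show (b :: (s ++ t)).count a + gg a (s ++ t) = (b :: s).count a + gg a s + gg a t + _
    rw [ih, List.count_cons, List.count_append, List.count_cons]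
    simp [List.length_cons]
    ring

lemma meas_append (s t : Wd) : meas (s ++ t) = meas s + meas t + hh s t := by
  induction s with
  | nil => simp [meas, hh]
  | cons b s ih =>
    rw [List.cons_append]
    show gg b (s ++ t) + meas (s ++ t) = (gg b s + meas s) + meas t + (gg b t + s.length * t.count b + hh s t)
    rw [gg_append, ih]
    ring

lemma hh_append_right (P v w : Wd) :
    hh P (v ++ w) = hh P v + hh P w + v.length * crossW P w := by
  induction P with
  | nil => simp [hh, crossW]
  | cons b P ih =>
    show gg b (v ++ w) + P.length * (v ++ w).count b + hh P (v ++ w) = _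
    rw [gg_append, List.count_append, ih]
    show _ = (gg b v + P.length * v.count b + hh P v) + (gg b w + P.length * w.count b + hh P w)
      + v.length * (w.count b + crossW P w)
    ring

lemma hh_eq (P t : Wd) : hh P t = hg P t + hw P t := by
  induction P with
  | nil => simp [hh, hg, hw]
  | cons b P ih =>
    show gg b t + P.length * t.count b + hh P t = (gg b t + hg P t) + (P.length * t.count b + hw P t)
    rw [ih]; ring

lemma hw_congr (P t t' : Wd) (h : ∀ x, t.count x = t'.count x) : hw P t = hw P t' := by
  induction P with
  | nil => simp [hw]
  | cons b P ih =>
    show P.length * t.count b + hw P t = P.length * t'.count b + hw P t'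
    rw [h, ih]

lemma ite_eq_comm (d a : ℕ) : (if d = a then (1:ℕ) else 0) = (if a = d then 1 else 0) := by
  by_cases h : d = a
  · simp [h]
  · simp [h, Ne.symm h]

lemma hg_pair (P : Wd) (a b : ℕ) : hg P [a, b] = P.count a + 2 * P.count b := by
  induction P with
  | nil => simp [hg]
  | cons d P ih =>
    show gg d [a, b] + hg P [a, b] = (d :: P).count a + 2 * (d :: P).count b
    rw [ih, List.count_cons, List.count_cons]
    show [a,b].count d + ([b].count d + 0) + _ = _
    simp only [List.count_cons, List.count_nil, beq_iff_eq]
    rw [ite_eq_comm d a, ite_eq_comm d b]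
    omega

lemma hg_ocb (P : Wd) (o c : ℕ) : hg P [o, c, c] = P.count o + 5 * P.count c := by
  induction P with
  | nil => simp [hg]
  | cons d P ih =>
    show gg d [o, c, c] + hg P [o, c, c] = (d :: P).count o + 5 * (d :: P).count c
    rw [ih, List.count_cons, List.count_cons]
    show [o,c,c].count d + ([c,c].count d + ([c].count d + 0)) + _ = _
    simp only [List.count_cons, List.count_nil, beq_iff_eq]
    rw [ite_eq_comm d o, ite_eq_comm d c]
    omega

lemma hg_cco (P : Wd) (o c : ℕ) : hg P [c, c, o] = 3 * P.count o + 3 * P.count c := by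
  induction P with
  | nil => simp [hg]
  | cons d P ih =>
    show gg d [c, c, o] + hg P [c, c, o] = 3 * (d :: P).count o + 3 * (d :: P).count c
    rw [ih, List.count_cons, List.count_cons]
    show [c,c,o].count d + ([c,o].count d + ([o].count d + 0)) + _ = _
    simp only [List.count_cons, List.count_nil, beq_iff_eq]
    rw [ite_eq_comm d o, ite_eq_comm d c]
    omega

lemma meas_master (P mid Q : Wd) : meas (P ++ (mid ++ Q)) =
    meas P + meas mid + meas Q + hh mid Q + hg P mid + hw P mid + hh P Q
      + mid.length * crossW P Q := by
  rw [meas_append, hh_append_right, meas_append, hh_eq P mid]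
  ring

lemma meas_R1 (P Q : Wd) (c o : ℕ) (hoP : P.count o = 0) (hoQ : 1 ≤ Q.count o)
    (hcP : 1 ≤ P.count c) (hcQ : Q.count c = 0) :
    meas (P ++ c :: o :: Q) < meas (P ++ o :: c :: Q) := by
  have hne : o ≠ c := by rintro rfl; omega
  have e1 : P ++ c :: o :: Q = P ++ ([c, o] ++ Q) := by simp
  have e2 : P ++ o :: c :: Q = P ++ ([o, c] ++ Q) := by simp
  rw [e1, e2, meas_master, meas_master, hg_pair, hg_pair,
    hw_congr P [c,o] [o,c] (by intro x; simp [List.count_cons]; omega)]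
  have m1 : meas [c, o] = 0 := by simp [meas, gg, List.count_cons, hne]
  have m2 : meas [o, c] = 0 := by simp [meas, gg, List.count_cons, Ne.symm hne]
  have h1 : hh [c, o] Q = gg c Q + Q.count c + gg o Q := by
    show gg c Q + 1 * Q.count c + (gg o Q + 0 * Q.count o + 0) = _
    ring
  have h2 : hh [o, c] Q = gg o Q + Q.count o + gg c Q := by
    show gg o Q + 1 * Q.count o + (gg c Q + 0 * Q.count c + 0) = _
    ring
  rw [m1, m2, h1, h2]
  simp only [List.length_cons, List.length_nil]
  omega

lemma meas_R2 (P Q : Wd) (c o : ℕ) (hoP : P.count o = 0) (hoQ : 1 ≤ Q.count o)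
    (hcP : P.count c = 0) (hcQ : Q.count c = 0) :
    meas (P ++ c :: c :: o :: Q) < meas (P ++ o :: c :: c :: Q) := by
  have hne : o ≠ c := by rintro rfl; omega
  have e1 : P ++ c :: c :: o :: Q = P ++ ([c, c, o] ++ Q) := by simp
  have e2 : P ++ o :: c :: c :: Q = P ++ ([o, c, c] ++ Q) := by simp
  rw [e1, e2, meas_master, meas_master, hg_cco, hg_ocb,
    hw_congr P [c,c,o] [o,c,c] (by intro x; simp [List.count_cons]; omega)]
  have m1 : meas [c, c, o] = 1 := by
    simp [meas, gg, List.count_cons, hne, Ne.symm hne]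
  have m2 : meas [o, c, c] = 1 := by
    simp [meas, gg, List.count_cons, hne, Ne.symm hne]
  have h1 : hh [c, c, o] Q = gg c Q + 2 * Q.count c + (gg c Q + Q.count c + gg o Q) := by
    show gg c Q + 2 * Q.count c + (gg c Q + 1 * Q.count c + (gg o Q + 0 * Q.count o + 0)) = _
    ring
  have h2 : hh [o, c, c] Q = gg o Q + 2 * Q.count o + (gg c Q + Q.count c + gg c Q) := by
    show gg o Q + 2 * Q.count o + (gg c Q + 1 * Q.count c + (gg c Q + 0 * Q.count c + 0)) = _
    ring
  rw [m1, m2, h1, h2]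
  simp only [List.length_cons, List.length_nil]
  omega

/- ===== part 3 : bad decompositions ===== -/
def BadAt (u : Wd) (n : ℕ) : Prop :=
  ∃ p x m q, u = p ++ x :: (m ++ x :: q) ∧ m.length = n ∧ m ≠ [] ∧ ∀ z ∈ m, z ∉ linW u

lemma decomp_bad (u : Wd) (x : ℕ) (i j : ℕ) (hij : i + 1 < j) (hj : j < u.length)
    (hgi : u.getD i 0 = x) (hgj : u.getD j 0 = x)
    (hnl : ∀ k, i < k → k < j → u.getD k 0 ∉ linW u) : BadAt u (j - i - 1) := by
  have hi : i < u.length := by omega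
  have hgi' : u[i] = x := by rw [← List.getD_eq_getElem u 0 hi]; exact hgi
  have hgj' : u[j] = x := by rw [← List.getD_eq_getElem u 0 hj]; exact hgj
  set m : Wd := (u.drop (i+1)).take (j - i - 1) with hm
  have hmlen : m.length = j - i - 1 := by
    simp only [hm, List.length_take, List.length_drop]
    omega
  refine ⟨u.take i, x, m, u.drop (j+1), ?_, hmlen, ?_, ?_⟩
  · have h1 : u = u.take i ++ u.drop i := (List.take_append_drop i u).symm
    have h2 : u.drop i = x :: u.drop (i+1) := by
      rw [List.drop_eq_getElem_cons hi, hgi']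
    have h3 : u.drop (i+1) = m ++ (u.drop (i+1)).drop (j - i - 1) := by
      rw [hm, List.take_append_drop]
    have h4 : (u.drop (i+1)).drop (j - i - 1) = u.drop j := by
      rw [List.drop_drop]
      congr 1
      omega
    have h5 : u.drop j = x :: u.drop (j+1) := by
      rw [List.drop_eq_getElem_cons hj, hgj']
    rw [h3, h4, h5] at h2
    rw [h2] at h1
    exact h1
  · intro hnil
    rw [hnil] at hmlen
    simp at hmlen
    omega
  · intro z hz
    obtain ⟨l, hl, hzl⟩ := List.getElem_of_mem hz
    have hl' : l < j - i - 1 := by omega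
    have : m[l] = u[i + 1 + l]'(by omega) := by
      simp only [hm, List.getElem_take, List.getElem_drop]
    rw [this] at hzl
    have := hnl (i + 1 + l) (by omega) (by omega)
    rwa [List.getD_eq_getElem u 0 (by omega), hzl] at this

lemma compact_of_no_bad (u : Wd) (h : ∀ n, ¬ BadAt u n) : CompactW u := by
  intro x _ i j hij hj hgi hgj hnl k hik hkj
  have hij2 : i + 1 < j := by omega
  exact absurd (decomp_bad u x i j hij2 hj hgi hgj hnl) (h _)

lemma bad_of_not_compact (u : Wd) (h : ¬ CompactW u) : ∃ n, BadAt u n := by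
  unfold CompactW at h
  push_neg at h
  obtain ⟨x, hx, i, j, hij, hj, hgi, hgj, hnl, k, hik, hkj, _⟩ := h
  exact ⟨_, decomp_bad u x i j (by omega) hj hgi hgj hnl⟩

/- ===== part 4 : the scan ===== -/
lemma scan (u p q : Wd) (x : ℕ) (n₀ : ℕ)
    (hlim : ∀ z, u.count z ≤ 2)
    (hmin : ∀ k, k < n₀ → ¬ BadAt u k) :
    ∀ (m' os : Wd),
      u = p ++ x :: ((os ++ m') ++ x :: q) →
      (os ++ m').length = n₀ →
      (∀ z ∈ os ++ m', z ∉ linW u) →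
      os ++ m' ≠ [] →
      (∀ z ∈ os, z ∈ q) →
      ∃ v, RelW u v ∧ meas v < meas u ∧ ∀ y, v.count y = u.count y := by
  intro m'
  induction m' with
  | nil =>
    intro os hu hlen hnl hne hosq
    rw [List.append_nil] at hu hlen hnl hne
    rcases List.eq_nil_or_concat os with rfl | ⟨os0, o, rfl⟩
    · exact absurd rfl hne
    · simp only [List.concat_eq_append] at hu hlen hnl hne hosq
      have hoq : o ∈ q := hosq o (by simp)
      obtain ⟨q1, q2, hq⟩ := List.append_of_mem hoq
      have hu1 : u = p ++ x :: os0 ++ o :: x :: q1 ++ o :: q2 := by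
        rw [hu, hq]; simp [List.append_assoc]
      refine ⟨p ++ x :: os0 ++ x :: o :: q1 ++ o :: q2, ?_, ?_, ?_⟩
      · rw [hu1]; exact rel_R1 p os0 q1 q2 x o
      · have hu2 : u = (p ++ x :: os0) ++ o :: x :: q := by
          rw [hu]; simp [List.append_assoc]
        have hv2 : p ++ x :: os0 ++ x :: o :: q1 ++ o :: q2
            = (p ++ x :: os0) ++ x :: o :: q := by
          rw [hq]; simp [List.append_assoc]
        rw [hu2, hv2]
        apply meas_R1
        · have h := hlim o
          rw [hu1] at h
          simp only [List.count_append, List.count_cons, beq_iff_eq, if_true, eq_self_iff_true] at h ⊢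
          omega
        · rw [hq]; simp only [List.count_append, List.count_cons, beq_iff_eq, if_true, eq_self_iff_true]; omega
        · simp only [List.count_append, List.count_cons, beq_iff_eq, if_true, eq_self_iff_true]; omega
        · have h := hlim x
          rw [hu1] at h
          rw [hq]
          simp only [List.count_append, List.count_cons, beq_iff_eq, if_true, eq_self_iff_true] at h ⊢
          omega
      · intro y
        rw [hu1]
        simp only [List.count_append, List.count_cons, beq_iff_eq, if_true, eq_self_iff_true]
        omega
  | cons c t ih =>
    intro os hu hlen hnl hne hosq
    by_cases hcq : c ∈ q
    · have e : (os ++ [c]) ++ t = os ++ c :: t := by simp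
      refine ih (os ++ [c]) (by rw [e]; exact hu) (by rw [e]; exact hlen)
        (by rw [e]; exact hnl) (by rw [e]; exact hne) ?_
      intro z hz
      rcases List.mem_append.mp hz with h | h
      · exact hosq z h
      · simp at h; subst h; exact hcq
    · have hclin : ¬ u.count c = 1 := by
        have := hnl c (by simp)
        simpa [linW] using this
      have hqc : q.count c = 0 := List.count_eq_zero.mpr hcq
      have hcos : os.count c = 0 := List.count_eq_zero.mpr (fun hc => hcq (hosq c hc))
      by_cases hcp : c ∈ p
      · obtain ⟨p1, p2, hp⟩ := List.append_of_mem hcp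
        rcases List.eq_nil_or_concat os with rfl | ⟨os0, o, rfl⟩
        · have hu1 : u = p1 ++ c :: p2 ++ x :: c :: t ++ x :: q := by
            rw [hu, hp]; simp [List.append_assoc]
          refine ⟨p1 ++ c :: p2 ++ c :: x :: t ++ x :: q, ?_, ?_, ?_⟩
          · rw [hu1]; exact rel_R1 p1 p2 t q c x
          · have hu2 : u = p ++ x :: c :: (t ++ x :: q) := by rw [hu]; simp
            have hv2 : p1 ++ c :: p2 ++ c :: x :: t ++ x :: q
                = p ++ c :: x :: (t ++ x :: q) := by
              rw [hp]; simp [List.append_assoc]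
            rw [hu2, hv2]
            apply meas_R1 p (t ++ x :: q) c x
            · have h := hlim x
              rw [hu1] at h
              rw [hp]
              simp only [List.count_append, List.count_cons, beq_iff_eq, if_true, eq_self_iff_true] at h ⊢
              omega
            · simp only [List.count_append, List.count_cons, beq_iff_eq, if_true, eq_self_iff_true]; omega
            · rw [hp]; simp only [List.count_append, List.count_cons, beq_iff_eq, if_true, eq_self_iff_true]; omega
            · have h := hlim c
              rw [hu1] at h
              simp only [List.count_append, List.count_cons, beq_iff_eq, if_true, eq_self_iff_true] at h ⊢
              omega
          · intro y
            rw [hu1]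
            simp only [List.count_append, List.count_cons, beq_iff_eq, if_true, eq_self_iff_true]
            omega
        · simp only [List.concat_eq_append] at hu hlen hnl hne hosq hcos
          have hoq : o ∈ q := hosq o (by simp)
          obtain ⟨q1, q2, hq⟩ := List.append_of_mem hoq
          have hu1 : u = p1 ++ c :: (p2 ++ x :: os0) ++ o :: c :: (t ++ x :: q1) ++ o :: q2 := by
            rw [hu, hp, hq]; simp [List.append_assoc]
          refine ⟨p1 ++ c :: (p2 ++ x :: os0) ++ c :: o :: (t ++ x :: q1) ++ o :: q2, ?_, ?_, ?_⟩
          · rw [hu1]; exact rel_R1 p1 (p2 ++ x :: os0) (t ++ x :: q1) q2 c o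
          · have hu2 : u = (p ++ x :: os0) ++ o :: c :: (t ++ x :: q) := by
              rw [hu]; simp [List.append_assoc]
            have hv2 : p1 ++ c :: (p2 ++ x :: os0) ++ c :: o :: (t ++ x :: q1) ++ o :: q2
                = (p ++ x :: os0) ++ c :: o :: (t ++ x :: q) := by
              rw [hp, hq]; simp [List.append_assoc]
            rw [hu2, hv2]
            apply meas_R1 (p ++ x :: os0) (t ++ x :: q) c o
            · have h := hlim o
              rw [hu1] at h
              rw [hp]
              simp only [List.count_append, List.count_cons, beq_iff_eq, if_true, eq_self_iff_true] at h ⊢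
              omega
            · rw [hq]; simp only [List.count_append, List.count_cons, beq_iff_eq, if_true, eq_self_iff_true]; omega
            · rw [hp]; simp only [List.count_append, List.count_cons, beq_iff_eq, if_true, eq_self_iff_true]; omega
            · have h := hlim c
              rw [hu1] at h
              rw [hq]
              simp only [List.count_append, List.count_cons, beq_iff_eq, if_true, eq_self_iff_true] at h ⊢
              omega
          · intro y
            rw [hu1]
            simp only [List.count_append, List.count_cons, beq_iff_eq, if_true, eq_self_iff_true]
            omega
      · have hpc0 : p.count c = 0 := List.count_eq_zero.mpr hcp
        have hct : c ∈ t := by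
          by_contra hct
          have ht0 : t.count c = 0 := List.count_eq_zero.mpr hct
          have h := hlim c
          have h2 := hclin
          rw [hu] at h h2
          simp only [List.count_append, List.count_cons, beq_iff_eq, if_true, eq_self_iff_true] at h h2
          omega
        obtain ⟨s, t₂, hts⟩ := List.append_of_mem hct
        by_cases hs : s = []
        · subst hs
          simp only [List.nil_append] at hts
          rcases List.eq_nil_or_concat os with rfl | ⟨os0, o, rfl⟩
          · have hu1 : u = p ++ x :: c :: c :: t₂ ++ x :: q := by
              rw [hu, hts]; simp
            refine ⟨p ++ c :: c :: x :: t₂ ++ x :: q, ?_, ?_, ?_⟩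
            · rw [hu1]; exact rel_R2 p t₂ q c x
            · have hu2 : u = p ++ x :: c :: c :: (t₂ ++ x :: q) := by
                rw [hu, hts]; simp
              have hv2 : p ++ c :: c :: x :: t₂ ++ x :: q
                  = p ++ c :: c :: x :: (t₂ ++ x :: q) := by simp
              rw [hu2, hv2]
              apply meas_R2 p (t₂ ++ x :: q) c x
              · have h := hlim x
                rw [hu1] at h
                simp only [List.count_append, List.count_cons, beq_iff_eq, if_true, eq_self_iff_true] at h ⊢
                omega
              · simp only [List.count_append, List.count_cons, beq_iff_eq, if_true, eq_self_iff_true]; omega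
              · exact hpc0
              · have h := hlim c
                rw [hu1] at h
                simp only [List.count_append, List.count_cons, beq_iff_eq, if_true, eq_self_iff_true] at h ⊢
                omega
            · intro y
              rw [hu1]
              simp only [List.count_append, List.count_cons, beq_iff_eq, if_true, eq_self_iff_true]
              omega
          · simp only [List.concat_eq_append] at hu hlen hnl hne hosq hcos
            have hoq : o ∈ q := hosq o (by simp)
            obtain ⟨q1, q2, hq⟩ := List.append_of_mem hoq
            have hu1 : u = (p ++ x :: os0) ++ o :: c :: c :: (t₂ ++ x :: q1) ++ o :: q2 := by
              rw [hu, hts, hq]; simp [List.append_assoc]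
            refine ⟨(p ++ x :: os0) ++ c :: c :: o :: (t₂ ++ x :: q1) ++ o :: q2, ?_, ?_, ?_⟩
            · rw [hu1]; exact rel_R2 (p ++ x :: os0) (t₂ ++ x :: q1) q2 c o
            · have hu2 : u = (p ++ x :: os0) ++ o :: c :: c :: (t₂ ++ x :: q) := by
                rw [hu, hts]; simp [List.append_assoc]
              have hv2 : (p ++ x :: os0) ++ c :: c :: o :: (t₂ ++ x :: q1) ++ o :: q2
                  = (p ++ x :: os0) ++ c :: c :: o :: (t₂ ++ x :: q) := by
                rw [hq]; simp [List.append_assoc]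
              rw [hu2, hv2]
              apply meas_R2 (p ++ x :: os0) (t₂ ++ x :: q) c o
              · have h := hlim o
                rw [hu1] at h
                simp only [List.count_append, List.count_cons, beq_iff_eq, if_true, eq_self_iff_true] at h ⊢
                omega
              · rw [hq]; simp only [List.count_append, List.count_cons, beq_iff_eq, if_true, eq_self_iff_true]; omega
              · have h := hlim c
                rw [hu1] at h
                simp only [List.count_append, List.count_cons, beq_iff_eq, if_true, eq_self_iff_true] at h ⊢
                omega
              · have h := hlim c
                rw [hu1] at h
                rw [hq]
                simp only [List.count_append, List.count_cons, beq_iff_eq, if_true, eq_self_iff_true] at h ⊢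
                omega
            · intro y
              rw [hu1]
              simp only [List.count_append, List.count_cons, beq_iff_eq, if_true, eq_self_iff_true]
              omega
        · exfalso
          apply hmin s.length
          · rw [← hlen]
            rw [hts]
            simp
            omega
          · refine ⟨p ++ x :: os, c, s, t₂ ++ x :: q, ?_, rfl, hs, ?_⟩
            · rw [hu, hts]; simp [List.append_assoc]
            · intro z hz
              apply hnl
              rw [hts]
              simp [hz]

/- ===== step and main ===== -/
lemma step (u : Wd) (hlim : ∀ z, u.count z ≤ 2) (h : ¬ CompactW u) :
    ∃ v, RelW u v ∧ meas v < meas u ∧ ∀ y, v.count y = u.count y := by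
  classical
  have hex : ∃ n, BadAt u n := bad_of_not_compact u h
  obtain ⟨p, x, m, q, hu, hlen, hne, hnl⟩ := Nat.find_spec hex
  have hmin : ∀ k, k < Nat.find hex → ¬ BadAt u k := fun k hk => Nat.find_min hex hk
  exact scan u p q x (Nat.find hex) hlim hmin m [] (by simpa using hu) (by simpa using hlen)
    (by simpa using hnl) (by simpa using hne) (by simp)

theorem stmt13 (u : Wd) (hlim : ∀ x, u.count x ≤ 2) :
    ∃ w : Wd, CompactW w ∧
      Consequence (delta {sigmaMu, ([1,0,0,2,1], [0,0,1,2,1])}) (u, w) := by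
  have key : ∀ N (u : Wd), meas u < N → (∀ z, u.count z ≤ 2) →
      ∃ w, CompactW w ∧ RelW u w := by
    intro N
    induction N with
    | zero => intro u h _; exact absurd h (Nat.not_lt_zero _)
    | succ N ih =>
      intro u hm hl
      by_cases hc : CompactW u
      · exact ⟨u, hc, rel_refl u⟩
      · obtain ⟨v, hrel, hlt, hcnt⟩ := step u hl hc
        obtain ⟨w, hcw, hrw⟩ := ih v (by omega) (fun z => by rw [hcnt z]; exact hl z)
        exact ⟨w, hcw, rel_trans hrel hrw⟩
  obtain ⟨w, hcw, hrw⟩ := key (meas u + 1) u (Nat.lt_succ_self _) hlim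
  exact ⟨w, hcw, hrw⟩
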